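/- Fix a prime binary word w of length d and φ ∈ S¹, and let m_{w,φ} = (A_w D_φ, B_w D_φ, ℂ^d) be the associated atomic P-module. Then m_{w,φ} is irreducible: the only subspaces of ℂ^d invariant under both A_w D_φ and B_w D_φ are {0} and ℂ^d. -/

import Mathlib

open Filter Topology
open scoped InnerProductSpace

/-- The partial shift matrix `A_w`: `A_w e_n = e_{n+1 mod d}` if the `n`-th digit of
`w` is `0` (i.e. `false`), else `A_w e_n = 0`. -/
def Aw (d : ℕ) (w : Fin d → Bool) : Matrix (Fin d) (Fin d) ℂ :=
  fun i j => if w j = false ∧ (i : ℕ) = ((j : ℕ) + 1) % d then 1 else 0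

/-- The partial shift matrix `B_w`: `B_w e_n = e_{n+1 mod d}` if the `n`-th digit of
`w` is `1` (i.e. `true`), else `B_w e_n = 0`. -/
def Bw (d : ℕ) (w : Fin d → Bool) : Matrix (Fin d) (Fin d) ℂ :=
  fun i j => if w j = true ∧ (i : ℕ) = ((j : ℕ) + 1) % d then 1 else 0

/-- The diagonal matrix `diag(1, …, 1, φ)`. -/
def Dmat (d : ℕ) (φ : ℂ) : Matrix (Fin d) (Fin d) ℂ :=
  Matrix.diagonal fun i => if (i : ℕ) = d - 1 then φ else 1

/-- A binary word `w` of length `d` is prime iff it is not a proper power, i.e. it is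
not invariant under the cyclic shift by `k` for any proper divisor `k` of `d`. -/
def IsPrimeWord (d : ℕ) (w : Fin d → Bool) : Prop :=
  ∀ k : ℕ, 0 < k → k < d → k ∣ d →
    ¬ ∀ i : Fin d, w ⟨((i : ℕ) + k) % d, Nat.mod_lt _ i.pos⟩ = w i

/-- The periodic ray `w^∞` obtained by repeating the word `w` of length `d`. -/
def rayOfWord (d : ℕ) (hd : 0 < d) (w : Fin d → Bool) : ℕ → Bool :=
  fun n => w ⟨n % d, Nat.mod_lt _ hd⟩

/-- Action of a finite binary word on `ℂ^d` via the matrices `A` (digit `false`) and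
`B` (digit `true`), the first digit acting first. -/
noncomputable def matAct {d : ℕ} (A B : Matrix (Fin d) (Fin d) ℂ) :
    List Bool → EuclideanSpace ℂ (Fin d) → EuclideanSpace ℂ (Fin d)
  | [], ξ => ξ
  | b :: rest, ξ => matAct A B rest (Matrix.toEuclideanLin (if b then B else A) ξ)

/-- The length-`n` prefix of a ray `p : ℕ → Bool` as a list. -/
def pre (p : ℕ → Bool) (n : ℕ) : List Bool := List.ofFn fun i : Fin n => p i

namespace Stmt12Aux

open scoped Fin.CommRing Fin.NatCast

variable {d : ℕ} [NeZero d]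

/-- The diagonal entries of `Dmat`. -/
def cc (d : ℕ) (φ : ℂ) (j : Fin d) : ℂ := if (j : ℕ) = d - 1 then φ else 1

lemma cc_ne (φ : ℂ) (hφ : φ ≠ 0) (j : Fin d) : cc d φ j ≠ 0 := by
  unfold cc; split <;> simp [hφ]

lemma shift_val (j : Fin d) : ((j + 1 : Fin d) : ℕ) = ((j : ℕ) + 1) % d := by
  rw [Fin.add_def, Fin.val_one']
  conv_rhs => rw [Nat.add_mod, Nat.mod_eq_of_lt j.isLt]

lemma cond_iff (i j : Fin d) : ((i : ℕ) = ((j : ℕ) + 1) % d) ↔ j = i - 1 := by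
  rw [← shift_val, eq_sub_iff_add_eq]
  constructor
  · intro h; exact Fin.val_injective h.symm
  · intro h; rw [h]

/-- Coordinate masking. -/
def mask (f : Fin d → Bool) (x : EuclideanSpace ℂ (Fin d)) : EuclideanSpace ℂ (Fin d) :=
  WithLp.toLp 2 (fun j => if f j then x j else 0)

lemma mask_comp (f g : Fin d → Bool) (x : EuclideanSpace ℂ (Fin d)) :
    mask f (mask g x) = mask (fun j => f j && g j) x := by
  ext j
  by_cases hf : f j <;> by_cases hg : g j <;> simp [mask, hf, hg]

open Matrix in
lemma apply_gen (w : Fin d → Bool) (φ : ℂ) (M : Matrix (Fin d) (Fin d) ℂ) (b : Bool)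
    (hM : ∀ i j, M i j = if w j = b ∧ (i : ℕ) = ((j : ℕ) + 1) % d then 1 else 0)
    (x : EuclideanSpace ℂ (Fin d)) (i : Fin d) :
    Matrix.toEuclideanLin (M * Dmat d φ) x i
      = if w (i - 1) = b then cc d φ (i - 1) * x (i - 1) else 0 := by
  have h0 : Matrix.toEuclideanLin (M * Dmat d φ) x i = ∑ j, (M * Dmat d φ) i j * x j := rfl
  rw [h0]
  have h1 : ∀ j : Fin d, (M * Dmat d φ) i j * x j
      = if j = i - 1 then (if w j = b then cc d φ j * x j else 0) else 0 := by
    intro j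
    have hD : Dmat d φ = Matrix.diagonal (cc d φ) := rfl
    rw [hD, Matrix.mul_diagonal, hM]
    by_cases h1 : w j = b <;> by_cases h2 : j = i - 1 <;>
      simp [cond_iff, h1, h2, mul_comm, mul_assoc]
  rw [Finset.sum_congr rfl fun j _ => h1 j, Finset.sum_ite_eq' Finset.univ (i - 1)]
  simp

/-- The successive mask predicates comparing shifted digits with those at `i0`. -/
def Pm (w : Fin d → Bool) (i0 : Fin d) : ℕ → Fin d → Bool
  | 0 => fun _ => true
  | m + 1 => fun j => (w (j - (m : Fin d)) == w (i0 - (m : Fin d))) && Pm w i0 m j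

lemma Pm_iff (w : Fin d → Bool) (i0 : Fin d) (m : ℕ) (j : Fin d) :
    Pm w i0 m j = true ↔ ∀ n < m, w (j - (n : Fin d)) = w (i0 - (n : Fin d)) := by
  induction m with
  | zero => simp [Pm]
  | succ m ih =>
    simp only [Pm, Bool.and_eq_true, beq_iff_eq, ih]
    constructor
    · rintro ⟨h1, h2⟩ n hn
      rcases Nat.lt_succ_iff_lt_or_eq.mp hn with h | h
      · exact h2 n h
      · subst h; exact h1
    · intro h
      exact ⟨h m (Nat.lt_succ_self m), fun n hn => h n (hn.trans (Nat.lt_succ_self m))⟩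

/-- The key arithmetic consequence of primality. -/
lemma prime_key (w : Fin d → Bool) (hw : IsPrimeWord d w) (i0 j : Fin d)
    (h : ∀ n < d, w (j - (n : Fin d)) = w (i0 - (n : Fin d))) : j = i0 := by
  by_contra hne
  have hall : ∀ t : Fin d, w (j - t) = w (i0 - t) := by
    intro t
    have := h t.val t.isLt
    rwa [Fin.cast_val_eq_self] at this
  have hper : ∀ i : Fin d, w (i + (j - i0)) = w i := by
    intro i
    have h2 := hall (i0 - i)
    rw [sub_sub_cancel] at h2
    rw [show j - (i0 - i) = i + (j - i0) by ring] at h2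
    exact h2
  set k : Fin d := j - i0 with hk
  have hk0 : k ≠ 0 := by
    rw [hk, sub_ne_zero]; exact hne
  set K : ℕ := (k : ℕ) with hK
  have hK0 : 0 < K := by
    rcases Nat.eq_zero_or_pos K with h | h
    · exact absurd (Fin.val_injective (h : (k : ℕ) = ((0 : Fin d) : ℕ)) : k = 0) hk0
    · exact h
  have hKd : K < d := k.isLt
  -- periodicity of n ↦ w ↑n
  have hWK : ∀ n : ℕ, w (((n + K : ℕ) : Fin d)) = w ((n : ℕ) : Fin d) := by
    intro n
    rw [Nat.cast_add, hK, Fin.cast_val_eq_self]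
    exact hper _
  have hWd : ∀ n : ℕ, w (((n + d : ℕ) : Fin d)) = w ((n : ℕ) : Fin d) := by
    intro n
    rw [Nat.cast_add]
    simp
  have hWdm : ∀ (b n : ℕ), w (((n + b * d : ℕ) : Fin d)) = w ((n : ℕ) : Fin d) := by
    intro b
    induction b with
    | zero => simp
    | succ b ih =>
      intro n
      have : n + (b + 1) * d = (n + b * d) + d := by ring
      rw [this, hWd, ih]
  have hWKm : ∀ (a n : ℕ), w (((n + a * K : ℕ) : Fin d)) = w ((n : ℕ) : Fin d) := by
    intro a
    induction a with
    | zero => simp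
    | succ a ih =>
      intro n
      have : n + (a + 1) * K = (n + a * K) + K := by ring
      rw [this, hWK, ih]
  set g : ℕ := Nat.gcd K d with hg
  have hg0 : 0 < g := Nat.gcd_pos_of_pos_left d hK0
  have hgd : g < d := lt_of_le_of_lt (Nat.gcd_le_left d hK0) hKd
  have hgdvd : g ∣ d := Nat.gcd_dvd_right K d
  obtain ⟨a, -, ha⟩ := Nat.exists_mul_mod_eq_gcd (show Nat.gcd K d < d from hgd)
  -- ha : K * a % d = Nat.gcd K d
  have hWg : ∀ n : ℕ, w (((n + g : ℕ) : Fin d)) = w ((n : ℕ) : Fin d) := by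
    intro n
    set q : ℕ := K * a / d with hq
    have h2 : K * a = g + d * q := by
      conv_lhs => rw [← Nat.mod_add_div (K * a) d]
      rw [ha, hq]
    calc w (((n + g : ℕ) : Fin d)) = w (((n + g + q * d : ℕ) : Fin d)) :=
          (hWdm q (n + g)).symm
      _ = w (((n + K * a : ℕ) : Fin d)) := by
          congr 2
          rw [h2]; ring
      _ = w (((n + a * K : ℕ) : Fin d)) := by rw [mul_comm K a]
      _ = w ((n : ℕ) : Fin d) := hWKm a n
  refine hw g hg0 hgd hgdvd fun i => ?_
  have h3 : (((i : ℕ) + g : ℕ) : Fin d) = ⟨((i : ℕ) + g) % d, Nat.mod_lt _ i.pos⟩ := by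
    apply Fin.ext
    exact Fin.val_natCast _ _
  have h4 := hWg (i : ℕ)
  rw [h3, Fin.cast_val_eq_self] at h4
  exact h4

end Stmt12Aux

open scoped Fin.CommRing Fin.NatCast

theorem stmt12 (d : ℕ) (hd : 0 < d) (w : Fin d → Bool) (hw : IsPrimeWord d w)
    (φ : ℂ) (hφ : ‖φ‖ = 1) (S : Submodule ℂ (EuclideanSpace ℂ (Fin d)))
    (hA : ∀ x ∈ S, Matrix.toEuclideanLin (Aw d w * Dmat d φ) x ∈ S)
    (hB : ∀ x ∈ S, Matrix.toEuclideanLin (Bw d w * Dmat d φ) x ∈ S) :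
    S = ⊥ ∨ S = ⊤ := by
  classical
  haveI : NeZero d := ⟨hd.ne'⟩
  open Stmt12Aux in
  have hφ0 : φ ≠ 0 := by
    intro h; rw [h] at hφ; simp at hφ
  by_cases hbot : S = ⊥
  · exact Or.inl hbot
  right
  set LA := Matrix.toEuclideanLin (Aw d w * Dmat d φ) with hLAdef
  set LB := Matrix.toEuclideanLin (Bw d w * Dmat d φ) with hLBdef
  set Tl : EuclideanSpace ℂ (Fin d) →ₗ[ℂ] EuclideanSpace ℂ (Fin d) := LA + LB with hTdef
  have hLAapp : ∀ x (i : Fin d),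
      LA x i = if w (i - 1) = false then Stmt12Aux.cc d φ (i - 1) * x (i - 1) else 0 :=
    fun x i => Stmt12Aux.apply_gen w φ (Aw d w) false (fun _ _ => rfl) x i
  have hLBapp : ∀ x (i : Fin d),
      LB x i = if w (i - 1) = true then Stmt12Aux.cc d φ (i - 1) * x (i - 1) else 0 :=
    fun x i => Stmt12Aux.apply_gen w φ (Bw d w) true (fun _ _ => rfl) x i
  have hTapp : ∀ (x : EuclideanSpace ℂ (Fin d)) (i : Fin d),
      Tl x i = Stmt12Aux.cc d φ (i - 1) * x (i - 1) := by
    intro x i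
    have h0 : Tl x i = LA x i + LB x i := rfl
    rw [h0, hLAapp, hLBapp]
    cases h : w (i - 1) <;> simp
  have hLapp : ∀ (b : Bool) x (i : Fin d),
      (if b then LB else LA) x i
        = if w (i - 1) = b then Stmt12Aux.cc d φ (i - 1) * x (i - 1) else 0 := by
    intro b
    cases b
    · exact hLAapp
    · exact hLBapp
  have hLS : ∀ (b : Bool), ∀ x ∈ S, (if b then LB else LA) x ∈ S := by
    intro b
    cases b
    · exact hA
    · exact hB
  have hTS : ∀ x ∈ S, Tl x ∈ S := fun x hx => S.add_mem (hA x hx) (hB x hx)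
  have hTinj : Function.Injective Tl := by
    intro x y hxy
    ext j
    have h1 : Tl x (j + 1) = Tl y (j + 1) := by rw [hxy]
    rw [hTapp, hTapp] at h1
    rw [add_sub_cancel_right] at h1
    exact mul_left_cancel₀ (Stmt12Aux.cc_ne φ hφ0 j) h1
  have hpre : ∀ y ∈ S, ∃ x ∈ S, Tl x = y := by
    let f : S →ₗ[ℂ] S := Tl.restrict hTS
    have hfinj : Function.Injective f := by
      intro a b hab
      exact Subtype.ext (hTinj (congrArg Subtype.val hab))
    have hfsurj : Function.Surjective f := LinearMap.injective_iff_surjective.mp hfinj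
    intro y hy
    obtain ⟨⟨x, hx⟩, hfx⟩ := hfsurj ⟨y, hy⟩
    exact ⟨x, hx, congrArg Subtype.val hfx⟩
  -- base masks
  have hmask_base : ∀ (b : Bool), ∀ x ∈ S, Stmt12Aux.mask (fun j => w j == b) x ∈ S := by
    intro b x hx
    obtain ⟨s, hs, hTs⟩ := hpre _ (hLS b x hx)
    have heq : Tl (Stmt12Aux.mask (fun j => w j == b) x) = (if b then LB else LA) x := by
      ext i
      rw [hTapp, hLapp]
      by_cases h : w (i - 1) = b
      · simp [Stmt12Aux.mask, h]
      · simp [Stmt12Aux.mask, h]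
    have h2 : Stmt12Aux.mask (fun j => w j == b) x = s := hTinj (heq.trans hTs.symm)
    rw [h2]; exact hs
  -- shift step
  have hmask_shift : ∀ f : Fin d → Bool, (∀ x ∈ S, Stmt12Aux.mask f x ∈ S) →
      ∀ x ∈ S, Stmt12Aux.mask (fun j => f (j - 1)) x ∈ S := by
    intro f hf x hx
    obtain ⟨y, hy, hTy⟩ := hpre x hx
    have h1 : Tl (Stmt12Aux.mask f y) ∈ S := hTS _ (hf y hy)
    have heq : Tl (Stmt12Aux.mask f y) = Stmt12Aux.mask (fun j => f (j - 1)) x := by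
      ext i
      rw [hTapp]
      by_cases h : f (i - 1)
      · simp [Stmt12Aux.mask, h, ← hTy, hTapp]
      · simp [Stmt12Aux.mask, h]
    rw [heq] at h1
    exact h1
  -- iterated shifts
  have hmask_shiftn : ∀ (n : ℕ) (b : Bool), ∀ x ∈ S,
      Stmt12Aux.mask (fun j => w (j - (n : Fin d)) == b) x ∈ S := by
    intro n
    induction n with
    | zero =>
      intro b x hx
      have h0 : (fun j : Fin d => w (j - ((0 : ℕ) : Fin d)) == b) = fun j => w j == b := by
        funext j; norm_num
      rw [h0]
      exact hmask_base b x hx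
    | succ n ih =>
      intro b x hx
      have h1 := hmask_shift _ (ih b) x hx
      have h0 : (fun j : Fin d => w (j - 1 - (n : Fin d)) == b)
          = fun j => w (j - ((n + 1 : ℕ) : Fin d)) == b := by
        funext j
        have : j - 1 - (n : Fin d) = j - ((n + 1 : ℕ) : Fin d) := by push_cast; ring
        rw [this]
      rw [← h0]
      exact h1
  -- conjunction masks
  have hmask_P : ∀ (i0 : Fin d) (m : ℕ), ∀ x ∈ S, Stmt12Aux.mask (Stmt12Aux.Pm w i0 m) x ∈ S := by
    intro i0 m
    induction m with
    | zero =>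
      intro x hx
      have h0 : Stmt12Aux.mask (Stmt12Aux.Pm w i0 0) x = x := by
        ext j; simp [Stmt12Aux.mask, Stmt12Aux.Pm]
      rw [h0]; exact hx
    | succ m ih =>
      intro x hx
      have h1 := hmask_shiftn m (w (i0 - (m : Fin d))) _ (ih x hx)
      rw [Stmt12Aux.mask_comp] at h1
      exact h1
  -- a nonzero coordinate
  obtain ⟨x, hxS, hx0⟩ := (Submodule.ne_bot_iff S).mp hbot
  have hex : ∃ i1 : Fin d, x i1 ≠ 0 := by
    by_contra h
    push_neg at h
    exact hx0 (PiLp.ext fun i => by simp [h i])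
  obtain ⟨i1, hi1⟩ := hex
  -- the masked vector is supported at i1
  have hu : Stmt12Aux.mask (Stmt12Aux.Pm w i1 d) x ∈ S := hmask_P i1 d x hxS
  have humask : Stmt12Aux.mask (Stmt12Aux.Pm w i1 d) x
      = WithLp.toLp 2 (fun i : Fin d => if i = i1 then x i1 else 0) := by
    ext j
    by_cases h : j = i1
    · subst h
      have hP : Stmt12Aux.Pm w j d j = true :=
        (Stmt12Aux.Pm_iff w j d j).mpr fun n _ => rfl
      simp [Stmt12Aux.mask, hP]
    · have hP : Stmt12Aux.Pm w i1 d j = false := by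
        rcases Bool.eq_false_or_eq_true (Stmt12Aux.Pm w i1 d j) with h' | h'
        · exact absurd (Stmt12Aux.prime_key w hw i1 j ((Stmt12Aux.Pm_iff w i1 d j).mp h')) h
        · exact h'
      simp [Stmt12Aux.mask, hP, h]
  -- spread the support around the cycle
  have hstep : ∀ n : ℕ, ∃ ε : ℂ, ε ≠ 0 ∧
      (WithLp.toLp 2 (fun i : Fin d => if i = i1 + (n : Fin d) then ε else 0) :
        EuclideanSpace ℂ (Fin d)) ∈ S := by
    intro n
    induction n with
    | zero =>
      refine ⟨x i1, hi1, ?_⟩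
      have h0 : (WithLp.toLp 2 (fun i : Fin d => if i = i1 + ((0 : ℕ) : Fin d) then x i1 else 0) :
          EuclideanSpace ℂ (Fin d)) = Stmt12Aux.mask (Stmt12Aux.Pm w i1 d) x := by
        rw [humask]
        ext i
        norm_num
      rw [h0]
      exact hu
    | succ n ih =>
      obtain ⟨ε, hε, hmem⟩ := ih
      refine ⟨Stmt12Aux.cc d φ (i1 + (n : Fin d)) * ε,
        mul_ne_zero (Stmt12Aux.cc_ne φ hφ0 _) hε, ?_⟩
      have h1 := hTS _ hmem
      have h0 : Tl (WithLp.toLp 2 (fun i : Fin d => if i = i1 + (n : Fin d) then ε else 0) :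
            EuclideanSpace ℂ (Fin d))
          = WithLp.toLp 2 (fun i : Fin d => if i = i1 + ((n + 1 : ℕ) : Fin d)
              then Stmt12Aux.cc d φ (i1 + (n : Fin d)) * ε else 0) := by
        ext i
        rw [hTapp]
        simp only [PiLp.toLp_apply]
        have hcond : (i - 1 = i1 + (n : Fin d)) ↔ (i = i1 + ((n + 1 : ℕ) : Fin d)) := by
          rw [sub_eq_iff_eq_add]
          constructor
          · intro h; rw [h]; push_cast; ring
          · intro h; rw [h]; push_cast; ring
        by_cases h : i - 1 = i1 + (n : Fin d)
        · rw [if_pos h, if_pos (hcond.mp h), h]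
        · rw [if_neg h, if_neg (fun hh => h (hcond.mpr hh)), mul_zero]
      rw [h0] at h1
      exact h1
  -- every coordinate vector is in S
  have hsingle : ∀ j : Fin d,
      (WithLp.toLp 2 (fun i : Fin d => if i = j then (1 : ℂ) else 0) : EuclideanSpace ℂ (Fin d)) ∈ S := by
    intro j
    obtain ⟨ε, hε, hmem⟩ := hstep ((j - i1 : Fin d) : ℕ)
    have hj : i1 + (((j - i1 : Fin d) : ℕ) : Fin d) = j := by
      rw [Fin.cast_val_eq_self, add_sub_cancel]
    rw [hj] at hmem
    have h0 : (WithLp.toLp 2 (fun i : Fin d => if i = j then (1 : ℂ) else 0) : EuclideanSpace ℂ (Fin d))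
        = ε⁻¹ • (WithLp.toLp 2 (fun i : Fin d => if i = j then ε else 0) : EuclideanSpace ℂ (Fin d)) := by
      ext i
      show _ = ε⁻¹ * _
      by_cases h : i = j
      · simp [h, inv_mul_cancel₀ hε]
      · simp [h]
    rw [h0]
    exact S.smul_mem _ hmem
  -- conclude S = ⊤
  rw [Submodule.eq_top_iff']
  intro y
  have hy : y = ∑ j : Fin d, y j •
      (WithLp.toLp 2 (fun i : Fin d => if i = j then (1 : ℂ) else 0) : EuclideanSpace ℂ (Fin d)) := by
    ext i
    rw [WithLp.ofLp_sum, Finset.sum_apply]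
    have h0 : ∀ j : Fin d, (y j • (WithLp.toLp 2 (fun i : Fin d => if i = j then (1 : ℂ) else 0) :
        EuclideanSpace ℂ (Fin d))) i = if i = j then y j else 0 := by
      intro j
      show y j * _ = _
      by_cases h : i = j
      · simp [h]
      · simp [h]
    rw [Finset.sum_congr rfl fun j _ => h0 j]
    simp
  rw [hy]
  exact Submodule.sum_mem S fun j _ => S.smul_mem _ (hsingle j)
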